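/- Bounded rotation speed: for every n with 1 ≤ n ≤ N and every E ∈ ℝ with |E − ε_n| ≤ W + 1, the Prüfer angle derivatives satisfy the recursive inequality φ'_{n+1}(E) ≤ 1 + φ'_n(E)/η(W). -/

import Mathlib

/-- The quadratic form `q(x, φ) = 1 − 2x sin φ cos φ + x² sin² φ`. -/
noncomputable def qform (x φ : ℝ) : ℝ :=
  1 - 2 * x * Real.sin φ * Real.cos φ + x ^ 2 * Real.sin φ ^ 2

/-- `η(W) = min { q(x, φ) : |x| ≤ W + 1, 0 ≤ φ ≤ π }`. -/
noncomputable def eta (W : ℝ) : ℝ :=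
  sInf ((fun p : ℝ × ℝ => qform p.1 p.2) '' (Set.Icc (-(W + 1)) (W + 1) ×ˢ Set.Icc 0 Real.pi))

/-- One step of the Prüfer angle recursion: if `φ = kπ` (i.e. `sin φ = 0`) the next
angle is `(k − 1/2)π = φ − π/2`; otherwise, with `k = ⌊φ/π⌋` the unique integer with
`kπ < φ < (k+1)π`, the next angle is `arctan(E − e − cot φ) + kπ`. -/
noncomputable def pruferStep (e E φ : ℝ) : ℝ :=
  if Real.sin φ = 0 then φ - Real.pi / 2
  else Real.arctan (E - e - Real.cos φ / Real.sin φ) + Real.pi * ((⌊φ / Real.pi⌋ : ℤ) : ℝ)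

/-- The Prüfer angles: `φ_1(E) = π/2` and `φ_{n+1}(E) = pruferStep (ε n) E (φ_n(E))`
for `n ≥ 1`.  (The value at index `0` is junk, set to `π/2`.) -/
noncomputable def prufer (ε : ℕ → ℝ) (E : ℝ) : ℕ → ℝ
  | 0 => Real.pi / 2
  | 1 => Real.pi / 2
  | n + 2 => pruferStep (ε (n + 1)) E (prufer ε E (n + 1))

open Real Topology Filter

lemma qform_eq (x φ : ℝ) : qform x φ = (Real.cos φ - x * Real.sin φ)^2 + Real.sin φ^2 := by
  have h := Real.sin_sq_add_cos_sq φ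
  unfold qform; linear_combination -h

lemma qform_pos (x φ : ℝ) : 0 < qform x φ := by
  rw [qform_eq]
  rcases eq_or_ne (Real.sin φ) 0 with h | h
  · have hc := Real.sin_sq_add_cos_sq φ
    rw [h] at hc ⊢
    nlinarith
  · have h2 : 0 < Real.sin φ ^ 2 := by
      have := abs_pos.mpr h
      nlinarith [sq_abs (Real.sin φ)]
    nlinarith [sq_nonneg (Real.cos φ - x * Real.sin φ)]

lemma qform_add_int_mul_pi (x ψ : ℝ) (k : ℤ) : qform x (ψ + k * Real.pi) = qform x ψ := by
  have hs := Real.sin_add_int_mul_pi ψ k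
  have hc := Real.cos_add_int_mul_pi ψ k
  have hu : ((-1 : ℝ)^k)^2 = 1 := by
    rw [sq, ← zpow_add₀ (by norm_num : (-1:ℝ) ≠ 0)]
    have : (-1 : ℝ) ^ (k + k) = ((-1:ℝ)^(2:ℤ))^k := by
      rw [← zpow_mul]; ring_nf
    rw [this]; norm_num
  unfold qform
  rw [hs, hc]
  linear_combination (x^2 * Real.sin ψ^2 - 2*x*Real.sin ψ*Real.cos ψ) * hu

lemma qform_cont : Continuous (fun p : ℝ × ℝ => qform p.1 p.2) := by
  unfold qform; fun_prop

lemma eta_mem (W : ℝ) (hW : 0 ≤ W) :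
    eta W ∈ ((fun p : ℝ × ℝ => qform p.1 p.2) '' (Set.Icc (-(W + 1)) (W + 1) ×ˢ Set.Icc 0 Real.pi)) := by
  have hK : IsCompact (Set.Icc (-(W + 1)) (W + 1) ×ˢ Set.Icc (0:ℝ) Real.pi) :=
    (isCompact_Icc).prod isCompact_Icc
  have hne : ((fun p : ℝ × ℝ => qform p.1 p.2) '' (Set.Icc (-(W + 1)) (W + 1) ×ˢ Set.Icc 0 Real.pi)).Nonempty := by
    refine ⟨qform 0 0, ⟨(0,0), ?_, rfl⟩⟩
    exact ⟨⟨by simp; linarith, by simp; linarith⟩, ⟨le_refl _, Real.pi_pos.le⟩⟩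
  exact (hK.image qform_cont).sInf_mem hne

lemma eta_pos (W : ℝ) (hW : 0 ≤ W) : 0 < eta W := by
  obtain ⟨⟨x, φ⟩, _, h⟩ := eta_mem W hW
  rw [← h]; exact qform_pos x φ

lemma bddBelow_qform_image (W : ℝ) :
    BddBelow ((fun p : ℝ × ℝ => qform p.1 p.2) '' (Set.Icc (-(W + 1)) (W + 1) ×ˢ Set.Icc 0 Real.pi)) := by
  refine ⟨0, ?_⟩
  rintro y ⟨⟨x, φ⟩, _, rfl⟩
  exact (qform_pos x φ).le

lemma eta_le_one (W : ℝ) (hW : 0 ≤ W) : eta W ≤ 1 := by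
  have h1 : qform 0 0 = 1 := by unfold qform; simp
  have := csInf_le (bddBelow_qform_image W) (a := qform 0 0)
    ⟨(0,0), ⟨⟨by simp; linarith, by simp; linarith⟩, ⟨le_refl _, Real.pi_pos.le⟩⟩, rfl⟩
  rw [h1] at this; exact this

lemma eta_le_qform (W : ℝ) (hW : 0 ≤ W) (x φ : ℝ) (hx : |x| ≤ W + 1) :
    eta W ≤ qform x φ := by
  have hπ := Real.pi_pos
  set k : ℤ := ⌊φ / Real.pi⌋ with hk
  set ψ : ℝ := φ - k * Real.pi with hψ
  have h0 : 0 ≤ ψ := by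
    have h1 : (k : ℝ) ≤ φ / Real.pi := Int.floor_le _
    have h2 := mul_le_mul_of_nonneg_right h1 hπ.le
    rw [div_mul_cancel₀ _ hπ.ne'] at h2
    rw [hψ]; linarith
  have h1 : ψ ≤ Real.pi := by
    have h1 : φ / Real.pi < (k : ℝ) + 1 := Int.lt_floor_add_one _
    have h2 := mul_le_mul_of_nonneg_right h1.le hπ.le
    rw [div_mul_cancel₀ _ hπ.ne'] at h2
    rw [hψ]; nlinarith
  have heq : qform x φ = qform x ψ := by
    have h2 := qform_add_int_mul_pi x ψ k
    rw [hψ, sub_add_cancel] at h2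
    rw [hψ]; linarith [h2]
  rw [heq]
  refine csInf_le (bddBelow_qform_image W) ⟨(x, ψ), ⟨⟨?_, ?_⟩, ⟨h0, h1⟩⟩, rfl⟩
  · exact neg_le_of_abs_le hx
  · exact le_of_abs_le hx

lemma floor_div_pi_eq (φ : ℝ) (k : ℤ) (h1 : (k:ℝ) * Real.pi < φ) (h2 : φ < ((k:ℝ) + 1) * Real.pi) :
    ⌊φ / Real.pi⌋ = k := by
  have hπ := Real.pi_pos
  rw [Int.floor_eq_iff]
  constructor
  · rw [le_div_iff₀ hπ]; linarith
  · rw [div_lt_iff₀ hπ]; push_cast; linarith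

lemma sin_ne_zero_of_between (φ : ℝ) (k : ℤ) (h1 : (k:ℝ) * Real.pi < φ)
    (h2 : φ < ((k:ℝ) + 1) * Real.pi) : Real.sin φ ≠ 0 := by
  intro h
  obtain ⟨n, hn⟩ := Real.sin_eq_zero_iff.mp h
  have hπ := Real.pi_pos
  rw [← hn] at h1 h2
  have hkn : (k : ℝ) < n := by
    have := (mul_lt_mul_iff_left₀ hπ).mp h1; exact_mod_cast this
  have hnk : (n : ℝ) < k + 1 := by
    have := (mul_lt_mul_iff_left₀ hπ).mp h2; exact_mod_cast this
  have h3 : k < n := by exact_mod_cast hkn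
  have h4 : n < k + 1 := by exact_mod_cast hnk
  omega

/-- Near `φ = kπ`, the Prüfer step has a smooth formula. -/
lemma pruferStep_eq_near (e E φ : ℝ) (k : ℤ)
    (hψ : |φ - k * Real.pi| < Real.pi / 2)
    (hd : (E - e) * Real.sin (φ - k * Real.pi) - Real.cos (φ - k * Real.pi) < 0) :
    pruferStep e E φ = k * Real.pi - Real.pi / 2
      - Real.arctan (Real.sin (φ - k * Real.pi) /
          ((E - e) * Real.sin (φ - k * Real.pi) - Real.cos (φ - k * Real.pi))) := by
  have hπ := Real.pi_pos
  set ψ : ℝ := φ - k * Real.pi with hψdef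
  have hφ : φ = ψ + k * Real.pi := by rw [hψdef]; ring
  have habs := abs_lt.mp hψ
  have hsφ : Real.sin φ = (-1 : ℝ) ^ k * Real.sin ψ := by rw [hφ]; exact Real.sin_add_int_mul_pi ψ k
  have hcφ : Real.cos φ = (-1 : ℝ) ^ k * Real.cos ψ := by rw [hφ]; exact Real.cos_add_int_mul_pi ψ k
  have hu : ((-1 : ℝ) ^ k) ≠ 0 := by
    intro h; have := zpow_ne_zero k (by norm_num : (-1:ℝ) ≠ 0); exact this h
  rcases eq_or_ne (Real.sin ψ) 0 with hs | hs
  · -- ψ = 0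
    have hψ0 : ψ = 0 := by
      have := Real.sin_eq_zero_iff_of_lt_of_lt (by linarith : -Real.pi < ψ) (by linarith : ψ < Real.pi)
      exact this.mp hs
    have hsφ0 : Real.sin φ = 0 := by rw [hsφ, hs]; ring
    rw [pruferStep, if_pos hsφ0, hφ, hψ0]
    simp
  · have hsφ0 : Real.sin φ ≠ 0 := by
      rw [hsφ]; exact mul_ne_zero hu hs
    rw [pruferStep, if_neg hsφ0]
    have hcd : Real.cos φ / Real.sin φ = Real.cos ψ / Real.sin ψ := by
      rw [hsφ, hcφ, mul_div_mul_left _ _ hu]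
    have hdne : (E - e) * Real.sin ψ - Real.cos ψ ≠ 0 := ne_of_lt hd
    have ht : E - e - Real.cos φ / Real.sin φ = ((E - e) * Real.sin ψ - Real.cos ψ) / Real.sin ψ := by
      rw [hcd]; field_simp
    rcases lt_or_gt_of_ne hs with hneg | hpos
    · -- sin ψ < 0, so ψ < 0, t > 0, floor = k - 1
      have hψneg : ψ < 0 := by
        by_contra h
        push_neg at h
        exact absurd (Real.sin_nonneg_of_nonneg_of_le_pi h (by linarith)) (by linarith)
      have htpos : 0 < ((E - e) * Real.sin ψ - Real.cos ψ) / Real.sin ψ :=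
        div_pos_of_neg_of_neg hd hneg
      have hfl : ⌊φ / Real.pi⌋ = k - 1 := by
        apply floor_div_pi_eq
        · push_cast; rw [hφ]; linarith
        · push_cast; rw [hφ]; linarith
      rw [hfl, ht]
      have harc := Real.arctan_inv_of_pos htpos
      rw [inv_div] at harc
      push_cast
      linarith [harc]
    · -- sin ψ > 0, so ψ > 0, t < 0, floor = k
      have hψpos : 0 < ψ := by
        by_contra h
        push_neg at h
        exact absurd (Real.sin_nonpos_of_nonpos_of_neg_pi_le h (by linarith)) (by linarith)
      have htneg : ((E - e) * Real.sin ψ - Real.cos ψ) / Real.sin ψ < 0 :=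
        div_neg_of_neg_of_pos hd hpos
      have hfl : ⌊φ / Real.pi⌋ = k := by
        apply floor_div_pi_eq
        · rw [hφ]; linarith
        · push_cast; rw [hφ]; linarith
      rw [hfl, ht]
      have harc := Real.arctan_inv_of_neg htneg
      rw [inv_div] at harc
      linarith [harc]

lemma pruferStep_deriv (W e E₀ : ℝ) (hW : 0 ≤ W) (f : ℝ → ℝ)
    (hf : DifferentiableAt ℝ f E₀) (hf0 : 0 ≤ deriv f E₀) :
    DifferentiableAt ℝ (fun E => pruferStep e E (f E)) E₀ ∧
    0 ≤ deriv (fun E => pruferStep e E (f E)) E₀ ∧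
    (|E₀ - e| ≤ W + 1 → deriv (fun E => pruferStep e E (f E)) E₀ ≤ 1 + deriv f E₀ / eta W) := by
  have hπ := Real.pi_pos
  set a := deriv f E₀ with ha
  have hfd : HasDerivAt f a E₀ := hf.hasDerivAt
  set φ₀ := f E₀ with hφ₀
  have hηpos := eta_pos W hW
  have hη1 := eta_le_one W hW
  rcases eq_or_ne (Real.sin φ₀) 0 with hs | hs
  · -- Case B : sin φ₀ = 0
    obtain ⟨k, hk⟩ := Real.sin_eq_zero_iff.mp hs
    have hψ0 : f E₀ - k * Real.pi = 0 := by rw [← hφ₀, ← hk]; ring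
    -- eventual equality with the smooth formula
    have hev : ∀ᶠ E in 𝓝 E₀,
        |f E - k * Real.pi| < Real.pi / 2 ∧
        (E - e) * Real.sin (f E - k * Real.pi) - Real.cos (f E - k * Real.pi) < 0 := by
      have hc1 : ContinuousAt (fun E => |f E - k * Real.pi|) E₀ :=
        (hf.continuousAt.sub continuousAt_const).abs
      have hc2 : ContinuousAt (fun E =>
          (E - e) * Real.sin (f E - k * Real.pi) - Real.cos (f E - k * Real.pi)) E₀ := by
        have h3 : ContinuousAt (fun E => f E - k * Real.pi) E₀ :=
          hf.continuousAt.sub continuousAt_const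
        exact ((continuousAt_id.sub continuousAt_const).mul
          (Real.continuous_sin.continuousAt.comp h3)).sub
          (Real.continuous_cos.continuousAt.comp h3)
      have hv1 : |f E₀ - k * Real.pi| = 0 := by rw [hψ0]; simp
      have hv2 : (E₀ - e) * Real.sin (f E₀ - k * Real.pi) - Real.cos (f E₀ - k * Real.pi) = -1 := by
        rw [hψ0]; simp
      have he1 : ∀ᶠ E in 𝓝 E₀, |f E - k * Real.pi| < Real.pi / 2 := by
        have := hc1.tendsto
        rw [hv1] at this
        exact this.eventually_lt_const (by linarith)
      have he2 : ∀ᶠ E in 𝓝 E₀,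
          (E - e) * Real.sin (f E - k * Real.pi) - Real.cos (f E - k * Real.pi) < 0 := by
        have := hc2.tendsto
        rw [hv2] at this
        exact this.eventually_lt_const (by norm_num)
      exact he1.and he2
    have heq : (fun E => pruferStep e E (f E)) =ᶠ[𝓝 E₀]
        (fun E => (k : ℝ) * Real.pi - Real.pi / 2
          - Real.arctan (Real.sin (f E - k * Real.pi) /
              ((E - e) * Real.sin (f E - k * Real.pi) - Real.cos (f E - k * Real.pi)))) := by
      filter_upwards [hev] with E hE
      exact pruferStep_eq_near e E (f E) k hE.1 hE.2
    -- derivative of the smooth formula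
    have hψd : HasDerivAt (fun E => f E - k * Real.pi) a E₀ := hfd.sub_const _
    have hsind : HasDerivAt (fun E => Real.sin (f E - k * Real.pi))
        (Real.cos (f E₀ - k * Real.pi) * a) E₀ :=
      (Real.hasDerivAt_sin _).comp E₀ hψd
    have hcosd : HasDerivAt (fun E => Real.cos (f E - k * Real.pi))
        (-Real.sin (f E₀ - k * Real.pi) * a) E₀ :=
      (Real.hasDerivAt_cos _).comp E₀ hψd
    have hDd : HasDerivAt (fun E =>
        (E - e) * Real.sin (f E - k * Real.pi) - Real.cos (f E - k * Real.pi))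
        ((1 : ℝ) * Real.sin (f E₀ - k * Real.pi)
          + (E₀ - e) * (Real.cos (f E₀ - k * Real.pi) * a)
          - (-Real.sin (f E₀ - k * Real.pi) * a)) E₀ :=
      (((hasDerivAt_id E₀).sub_const e).mul hsind).sub hcosd
    have hD0 : (E₀ - e) * Real.sin (f E₀ - k * Real.pi) - Real.cos (f E₀ - k * Real.pi) = -1 := by
      rw [hψ0]; simp
    have hSd : HasDerivAt (fun E => Real.sin (f E - k * Real.pi) /
        ((E - e) * Real.sin (f E - k * Real.pi) - Real.cos (f E - k * Real.pi))) (-a) E₀ := by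
      have := hsind.div hDd (by rw [hD0]; norm_num)
      refine this.congr_deriv ?_
      rw [hψ0]
      norm_num
    have hGd : HasDerivAt (fun E => (k : ℝ) * Real.pi - Real.pi / 2
          - Real.arctan (Real.sin (f E - k * Real.pi) /
              ((E - e) * Real.sin (f E - k * Real.pi) - Real.cos (f E - k * Real.pi)))) a E₀ := by
      have harc := (Real.hasDerivAt_arctan (Real.sin (f E₀ - k * Real.pi) /
          ((E₀ - e) * Real.sin (f E₀ - k * Real.pi) - Real.cos (f E₀ - k * Real.pi)))).comp E₀ hSd
      have := (hasDerivAt_const E₀ ((k : ℝ) * Real.pi - Real.pi / 2)).sub harc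
      refine this.congr_deriv ?_
      rw [hψ0]
      norm_num
    have hg : HasDerivAt (fun E => pruferStep e E (f E)) a E₀ := hGd.congr_of_eventuallyEq heq
    refine ⟨hg.differentiableAt, ?_, ?_⟩
    · rw [hg.deriv]; exact hf0
    · intro _
      rw [hg.deriv]
      have h1 : a ≤ a / eta W := by
        rw [le_div_iff₀ hηpos]
        nlinarith
      linarith
  · -- Case A : sin φ₀ ≠ 0
    set k : ℤ := ⌊f E₀ / Real.pi⌋ with hkdef
    have hk1 : (k : ℝ) * Real.pi < f E₀ := by
      have hle : (k : ℝ) ≤ f E₀ / Real.pi := Int.floor_le _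
      have h2 := mul_le_mul_of_nonneg_right hle hπ.le
      rw [div_mul_cancel₀ _ hπ.ne'] at h2
      rcases lt_or_eq_of_le h2 with h | h
      · exact h
      · exact absurd (show Real.sin (f E₀) = 0 by
          rw [← h]; exact Real.sin_int_mul_pi k) hs
    have hk2 : f E₀ < ((k : ℝ) + 1) * Real.pi := by
      have hlt : f E₀ / Real.pi < (k : ℝ) + 1 := Int.lt_floor_add_one _
      have h2 := mul_lt_mul_of_pos_right hlt hπ
      rw [div_mul_cancel₀ _ hπ.ne'] at h2
      exact h2
    have hev : ∀ᶠ E in 𝓝 E₀, f E ∈ Set.Ioo ((k : ℝ) * Real.pi) (((k : ℝ) + 1) * Real.pi) := by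
      have hm : Set.Ioo ((k : ℝ) * Real.pi) (((k : ℝ) + 1) * Real.pi) ∈ 𝓝 (f E₀) :=
        Ioo_mem_nhds hk1 hk2
      exact hf.continuousAt.tendsto.eventually ((isOpen_Ioo (a := (k : ℝ) * Real.pi) (b := ((k : ℝ) + 1) * Real.pi)).eventually_mem ⟨hk1, hk2⟩)
    have heq : (fun E => pruferStep e E (f E)) =ᶠ[𝓝 E₀]
        (fun E => Real.arctan (E - e - Real.cos (f E) / Real.sin (f E)) + Real.pi * (k : ℝ)) := by
      filter_upwards [hev] with E hE
      have hsE := sin_ne_zero_of_between (f E) k hE.1 hE.2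
      rw [pruferStep, if_neg hsE, floor_div_pi_eq (f E) k hE.1 hE.2]
    -- derivative of the smooth formula
    have hsind : HasDerivAt (fun E => Real.sin (f E)) (Real.cos (f E₀) * a) E₀ :=
      (Real.hasDerivAt_sin _).comp E₀ hfd
    have hcosd : HasDerivAt (fun E => Real.cos (f E)) (-Real.sin (f E₀) * a) E₀ :=
      (Real.hasDerivAt_cos _).comp E₀ hfd
    have hsne : Real.sin (f E₀) ≠ 0 := hs
    have hdiv : HasDerivAt (fun E => Real.cos (f E) / Real.sin (f E))
        ((-Real.sin (f E₀) * a * Real.sin (f E₀) - Real.cos (f E₀) * (Real.cos (f E₀) * a)) /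
          Real.sin (f E₀) ^ 2) E₀ := hcosd.div hsind hsne
    have hinner : HasDerivAt (fun E => E - e - Real.cos (f E) / Real.sin (f E))
        (1 - (-Real.sin (f E₀) * a * Real.sin (f E₀) - Real.cos (f E₀) * (Real.cos (f E₀) * a)) /
          Real.sin (f E₀) ^ 2) E₀ := ((hasDerivAt_id E₀).sub_const e).sub hdiv
    set t : ℝ := E₀ - e - Real.cos (f E₀) / Real.sin (f E₀) with htdef
    have harc := (Real.hasDerivAt_arctan t).comp E₀ hinner
    have hGd := harc.add_const (Real.pi * (k : ℝ))
    set q : ℝ := qform (E₀ - e) (f E₀) with hqdef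
    have hq : 0 < q := qform_pos _ _
    have hpy := Real.sin_sq_add_cos_sq (f E₀)
    have hs2 : (0:ℝ) < Real.sin (f E₀) ^ 2 := by
      have := abs_pos.mpr hsne
      nlinarith [sq_abs (Real.sin (f E₀))]
    have h1t : (0:ℝ) < 1 + t ^ 2 := by positivity
    have hqs : q = Real.sin (f E₀) ^ 2 * (1 + t ^ 2) := by
      rw [hqdef, qform_eq, htdef]
      field_simp
      ring
    have hVal : 1 / (1 + t ^ 2) *
        (1 - (-Real.sin (f E₀) * a * Real.sin (f E₀) - Real.cos (f E₀) * (Real.cos (f E₀) * a)) /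
          Real.sin (f E₀) ^ 2) = (Real.sin (f E₀) ^ 2 + a) / q := by
      rw [hqs]
      field_simp
      linear_combination a * hpy
    have hGd2 : HasDerivAt (fun E => Real.arctan (E - e - Real.cos (f E) / Real.sin (f E))
        + Real.pi * (k : ℝ)) ((Real.sin (f E₀) ^ 2 + a) / q) E₀ := by
      exact hGd.congr_deriv hVal
    have hg : HasDerivAt (fun E => pruferStep e E (f E))
        ((Real.sin (f E₀) ^ 2 + a) / q) E₀ := hGd2.congr_of_eventuallyEq heq
    refine ⟨hg.differentiableAt, ?_, ?_⟩
    · rw [hg.deriv]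
      exact div_nonneg (by nlinarith [sq_nonneg (Real.sin (f E₀))]) hq.le
    · intro hx
      rw [hg.deriv]
      have hsq : Real.sin (f E₀) ^ 2 ≤ q := by
        rw [hqdef, qform_eq]
        nlinarith [sq_nonneg (Real.cos (f E₀) - (E₀ - e) * Real.sin (f E₀))]
      have hηq : eta W ≤ q := eta_le_qform W hW (E₀ - e) (f E₀) hx
      have h2 : a / q ≤ a / eta W := by
        rw [div_le_div_iff₀ hq hηpos]
        exact mul_le_mul_of_nonneg_left hηq hf0
      have h3 : Real.sin (f E₀) ^ 2 / q ≤ 1 := (div_le_one hq).mpr hsq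
      rw [add_div]
      linarith

lemma prufer_aux (W : ℝ) (hW : 0 ≤ W) (ε : ℕ → ℝ) :
    ∀ n, ∀ E, DifferentiableAt ℝ (fun E' => prufer ε E' n) E ∧
      0 ≤ deriv (fun E' => prufer ε E' n) E := by
  intro n
  induction n with
  | zero =>
    intro E
    have h : (fun E' : ℝ => prufer ε E' 0) = fun _ => Real.pi / 2 := rfl
    rw [h]
    exact ⟨differentiableAt_const _, by simp⟩
  | succ n ih =>
    match n with
    | 0 =>
      intro E
      have h : (fun E' : ℝ => prufer ε E' 1) = fun _ => Real.pi / 2 := rfl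
      rw [h]
      exact ⟨differentiableAt_const _, by simp⟩
    | m + 1 =>
      intro E
      have h : (fun E' : ℝ => prufer ε E' (m + 2)) =
          fun E' => pruferStep (ε (m + 1)) E' (prufer ε E' (m + 1)) := rfl
      rw [h]
      obtain ⟨hd, hge⟩ := ih E
      obtain ⟨h1, h2, _⟩ := pruferStep_deriv W (ε (m + 1)) E hW _ hd hge
      exact ⟨h1, h2⟩

/-- **Bounded rotation speed**: for every `1 ≤ n ≤ N` and every `E` with
`|E − ε_n| ≤ W + 1`, the Prüfer angle derivatives satisfy
`φ'_{n+1}(E) ≤ 1 + φ'_n(E)/η(W)`. -/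
theorem prufer_deriv_recursive_bound
    (N : ℕ) (hN : 1 ≤ N) (W : ℝ) (hW : 0 ≤ W)
    (ε : ℕ → ℝ) (hε : ∀ n, 1 ≤ n → n ≤ N → ε n ∈ Set.Icc 0 W) :
    ∀ n : ℕ, 1 ≤ n → n ≤ N → ∀ E : ℝ, |E - ε n| ≤ W + 1 →
      deriv (fun E' : ℝ => prufer ε E' (n + 1)) E
        ≤ 1 + deriv (fun E' : ℝ => prufer ε E' n) E / eta W := by
  intro n h1 _ E hx
  obtain ⟨m, rfl⟩ : ∃ m, n = m + 1 := ⟨n - 1, by omega⟩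
  have h : (fun E' : ℝ => prufer ε E' (m + 2)) =
      fun E' => pruferStep (ε (m + 1)) E' (prufer ε E' (m + 1)) := rfl
  rw [h]
  obtain ⟨hd, hge⟩ := prufer_aux W hW ε (m + 1) E
  exact (pruferStep_deriv W (ε (m + 1)) E hW _ hd hge).2.2 hx
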